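/- (Weak ergodicity criterion.) Let S ≥ 1, let B : [0,∞) → M_S(ℝ) and f : [0,∞) → ℝ^S be continuous, and let z*, z** : [0,∞) → ℝ^S be differentiable with (z*)'(t) = B(t)z*(t) + f(t) and (z**)'(t) = B(t)z**(t) + f(t) for all t ≥ 0. Let D be an invertible S×S real matrix with nonnegative entries such that there exists d > 0 with ‖Dz‖₁ ≥ d‖z‖₁ for all z ∈ ℝ^S, and such that D B(t) D⁻¹ is essentially nonnegative for every t ≥ 0. Set β^*(t) = −max_{1≤j≤S} ∑_{i=1}^S (D B(t) D⁻¹)_{ij}. Then ‖z*(t) − z**(t)‖₁ ≤ (1/d) · exp(−∫₀ᵗ β^*(τ) dτ) · ‖D(z*(0) − z**(0))‖₁ for all t ≥ 0; in particular, if ∫₀^∞ β^*(t) dt = +∞, then ‖z*(t) − z**(t)‖₁ → 0 as t → ∞. -/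

import Mathlib

open Set Filter Topology

private lemma slope_abs_tendsto' {g : ℝ → ℝ} {x g' : ℝ} (hg : HasDerivWithinAt g g' (Ici x) x) :
    Tendsto (slope (fun s => |g s|) x) (𝓝[>] x)
      (𝓝 (if g x = 0 then |g'| else if 0 < g x then g' else -g')) := by
  have hslope : Tendsto (slope g x) (𝓝[>] x) (𝓝 g') :=
    (hasDerivWithinAt_iff_tendsto_slope' (lt_irrefl x)).1 hg.Ioi_of_Ici
  have hcont : Tendsto g (𝓝[>] x) (𝓝 (g x)) := hg.continuousWithinAt.mono Ioi_subset_Ici_self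
  rcases eq_or_ne (g x) 0 with h0 | h0
  · simp only [h0, if_pos rfl]
    have : Tendsto (fun z => |slope g x z|) (𝓝[>] x) (𝓝 |g'|) :=
      (continuous_abs.tendsto g').comp hslope
    refine this.congr' ?_
    filter_upwards [self_mem_nhdsWithin] with z hz
    have hzx : 0 < z - x := sub_pos.2 hz
    rw [slope_def_field, slope_def_field, h0, sub_zero, abs_zero, sub_zero, abs_div,
      abs_of_pos hzx]
  · rcases lt_or_gt_of_ne h0 with hneg | hpos
    · simp only [if_neg h0, if_neg (not_lt.2 hneg.le)]
      have hev : ∀ᶠ z in 𝓝[>] x, g z < 0 := hcont (Iio_mem_nhds hneg)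
      refine (hslope.neg).congr' ?_
      filter_upwards [hev] with z hz
      rw [slope_def_field, slope_def_field, abs_of_neg hz, abs_of_neg hneg]
      ring
    · simp only [if_neg h0, if_pos hpos]
      have hev : ∀ᶠ z in 𝓝[>] x, 0 < g z := hcont (Ioi_mem_nhds hpos)
      refine hslope.congr' ?_
      filter_upwards [hev] with z hz
      rw [slope_def_field, slope_def_field, abs_of_pos hz, abs_of_pos hpos]

theorem weak_ergodicity_criterion
    (S : ℕ) (hS : 1 ≤ S)
    (B : ℝ → Matrix (Fin S) (Fin S) ℝ) (f : ℝ → Fin S → ℝ)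
    (hBcont : ∀ i j, ContinuousOn (fun t => B t i j) (Ici (0 : ℝ)))
    (hfcont : ∀ i, ContinuousOn (fun t => f t i) (Ici (0 : ℝ)))
    (z₁ z₂ : ℝ → Fin S → ℝ)
    (hz₁ : ∀ t ∈ Ici (0 : ℝ), ∀ i,
      HasDerivWithinAt (fun s => z₁ s i) ((B t).mulVec (z₁ t) i + f t i) (Ici 0) t)
    (hz₂ : ∀ t ∈ Ici (0 : ℝ), ∀ i,
      HasDerivWithinAt (fun s => z₂ s i) ((B t).mulVec (z₂ t) i + f t i) (Ici 0) t)
    (D : Matrix (Fin S) (Fin S) ℝ)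
    (hDinv : IsUnit D.det)
    (hDnonneg : ∀ i j, 0 ≤ D i j)
    (d : ℝ) (hd : 0 < d)
    (hDbelow : ∀ z : Fin S → ℝ, d * ∑ i, |z i| ≤ ∑ i, |D.mulVec z i|)
    (hHess : ∀ t ∈ Ici (0 : ℝ), ∀ i j, i ≠ j → 0 ≤ (D * B t * D⁻¹) i j)
    (bstar : ℝ → ℝ)
    (hbstar : ∀ t, bstar t = -(⨆ j, ∑ i, (D * B t * D⁻¹) i j)) :
    (∀ t ∈ Ici (0 : ℝ),
      ∑ i, |z₁ t i - z₂ t i| ≤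
        (1 / d) * Real.exp (-∫ τ in (0 : ℝ)..t, bstar τ) *
          ∑ i, |D.mulVec (z₁ 0 - z₂ 0) i|) ∧
    (Tendsto (fun T => ∫ τ in (0 : ℝ)..T, bstar τ) atTop atTop →
      Tendsto (fun t => ∑ i, |z₁ t i - z₂ t i|) atTop (nhds 0)) := by
  have hne : Nonempty (Fin S) := ⟨⟨0, hS⟩⟩
  set H : ℝ → Matrix (Fin S) (Fin S) ℝ := fun t => D * B t * D⁻¹ with hH
  set v : ℝ → Fin S → ℝ := fun t i => z₁ t i - z₂ t i with hv
  set w : ℝ → Fin S → ℝ := fun t => D.mulVec (v t) with hw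
  have hDD : D⁻¹ * D = 1 := Matrix.nonsing_inv_mul D hDinv
  -- derivative of v
  have hv' : ∀ t ∈ Ici (0 : ℝ), ∀ j,
      HasDerivWithinAt (fun s => v s j) ((B t).mulVec (v t) j) (Ici 0) t := by
    intro t ht j
    have h := (hz₁ t ht j).sub (hz₂ t ht j)
    have heq : (B t).mulVec (v t) j =
        ((B t).mulVec (z₁ t) j + f t j) - ((B t).mulVec (z₂ t) j + f t j) := by
      simp only [Matrix.mulVec, dotProduct, hv, mul_sub, Finset.sum_sub_distrib]
      ring
    rw [heq]
    exact h
  -- derivative of w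
  have hw' : ∀ t ∈ Ici (0 : ℝ), ∀ i,
      HasDerivWithinAt (fun s => w s i) ((H t).mulVec (w t) i) (Ici 0) t := by
    intro t ht i
    have h1 : HasDerivWithinAt (fun s => ∑ j, D i j * v s j)
        (∑ j, D i j * (B t).mulVec (v t) j) (Ici 0) t :=
      HasDerivWithinAt.fun_sum fun j _ => (hv' t ht j).const_mul (D i j)
    have h2 : (fun s => w s i) = fun s => ∑ j, D i j * v s j := by
      funext s; simp [hw, Matrix.mulVec, dotProduct]
    have h3 : (H t).mulVec (w t) i = ∑ j, D i j * (B t).mulVec (v t) j := by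
      have e1 : (H t).mulVec (w t) = (D * B t).mulVec (v t) := by
        rw [hw, Matrix.mulVec_mulVec, hH, Matrix.mul_assoc (D * B t) D⁻¹ D, hDD, Matrix.mul_one]
      rw [e1, ← Matrix.mulVec_mulVec]
      simp [Matrix.mulVec, dotProduct]
    rw [h2, h3]
    exact h1
  set φ : ℝ → ℝ := fun t => ∑ i, |w t i| with hφ
  set L : ℝ → ℝ := fun x => ∑ i,
    (if w x i = 0 then |(H x).mulVec (w x) i|
     else if 0 < w x i then (H x).mulVec (w x) i else -((H x).mulVec (w x) i)) with hL
  -- slope of φ tends to L from the right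
  have hφslope : ∀ x ∈ Ici (0 : ℝ), Tendsto (slope φ x) (𝓝[>] x) (𝓝 (L x)) := by
    intro x hx
    have h : Tendsto (fun z => ∑ i, slope (fun s => |w s i|) x z) (𝓝[>] x) (𝓝 (L x)) :=
      tendsto_finset_sum _ fun i _ =>
        slope_abs_tendsto' ((hw' x hx i).mono (Ici_subset_Ici.2 hx))
    refine h.congr fun z => ?_
    simp only [slope_def_field, hφ, ← Finset.sum_div, Finset.sum_sub_distrib]
  -- key differential inequality
  have hLbound : ∀ x ∈ Ici (0 : ℝ), L x ≤ (-bstar x) * φ x := by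
    intro x hx
    have hcol : ∀ j, ∑ i, H x i j ≤ -bstar x := by
      intro j
      rw [hbstar, neg_neg]
      exact le_ciSup (f := fun j : Fin S => ∑ i, H x i j)
        (Set.Finite.bddAbove (Set.finite_range _)) j
    have hterm : ∀ i : Fin S,
        (if w x i = 0 then |(H x).mulVec (w x) i|
         else if 0 < w x i then (H x).mulVec (w x) i else -((H x).mulVec (w x) i))
        ≤ ∑ j, H x i j * |w x j| := by
      intro i
      have hmv : (H x).mulVec (w x) i = ∑ j, H x i j * w x j := by
        simp [Matrix.mulVec, dotProduct]
      rcases eq_or_ne (w x i) 0 with h0 | h0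
      · rw [if_pos h0, hmv]
        refine le_trans (Finset.abs_sum_le_sum_abs _ _) (Finset.sum_le_sum fun j _ => ?_)
        rw [abs_mul]
        rcases eq_or_ne j i with rfl | hj
        · rw [h0, abs_zero, mul_zero, mul_zero]
        · rw [abs_of_nonneg (hHess x hx i j (Ne.symm hj))]
      · rw [if_neg h0]
        rcases lt_or_gt_of_ne h0 with hneg | hpos
        · rw [if_neg (not_lt.2 hneg.le), hmv, ← Finset.sum_neg_distrib]
          refine Finset.sum_le_sum fun j _ => ?_
          rcases eq_or_ne j i with rfl | hj
          · rw [abs_of_neg hneg]; ring_nf; exact le_rfl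
          · have := hHess x hx i j (Ne.symm hj)
            calc -(H x i j * w x j) = H x i j * (-w x j) := by ring
              _ ≤ H x i j * |w x j| := by
                  exact mul_le_mul_of_nonneg_left (neg_le_abs _) this
        · rw [if_pos hpos, hmv]
          refine Finset.sum_le_sum fun j _ => ?_
          rcases eq_or_ne j i with rfl | hj
          · rw [abs_of_pos hpos]
          · exact mul_le_mul_of_nonneg_left (le_abs_self _) (hHess x hx i j (Ne.symm hj))
    calc L x ≤ ∑ i, ∑ j, H x i j * |w x j| := Finset.sum_le_sum fun i _ => hterm i
      _ = ∑ j, (∑ i, H x i j) * |w x j| := by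
          rw [Finset.sum_comm]
          simp [Finset.sum_mul]
      _ ≤ ∑ j, (-bstar x) * |w x j| :=
          Finset.sum_le_sum fun j _ => mul_le_mul_of_nonneg_right (hcol j) (abs_nonneg _)
      _ = (-bstar x) * φ x := by rw [← Finset.mul_sum]
  -- continuity of φ
  have hwcont : ∀ i, ContinuousOn (fun t => w t i) (Ici (0 : ℝ)) := fun i x hx =>
    (hw' x hx i).continuousWithinAt
  have hφcont : ContinuousOn φ (Ici (0 : ℝ)) := fun x hx =>
    tendsto_finset_sum _ fun i _ => (hwcont i x hx).abs
  have hφ0 : 0 ≤ φ 0 := Finset.sum_nonneg fun i _ => abs_nonneg _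
  -- continuity of bstar
  have hHcont : ∀ i j, ContinuousOn (fun t => H t i j) (Ici (0 : ℝ)) := by
    intro i j
    have he : ∀ t, H t i j = ∑ l, (∑ k, D i k * B t k l) * D⁻¹ l j := by
      intro t
      simp [hH, Matrix.mul_apply]
    rw [continuousOn_congr fun t _ => he t]
    exact continuousOn_finset_sum _ fun l _ =>
      (continuousOn_finset_sum _ fun k _ => (continuousOn_const.mul (hBcont k l))).mul
        continuousOn_const
  have hbcont : ContinuousOn bstar (Ici (0 : ℝ)) := by
    intro x hx
    have h2 : ContinuousWithinAt
        (fun t => Finset.univ.sup' Finset.univ_nonempty fun j : Fin S => ∑ i, H t i j)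
        (Ici (0 : ℝ)) x :=
      ContinuousWithinAt.finset_sup'_apply Finset.univ_nonempty fun j _ =>
        tendsto_finset_sum _ fun i _ => hHcont i j x hx
    have h3 : ∀ t, bstar t =
        -(Finset.univ.sup' Finset.univ_nonempty fun j : Fin S => ∑ i, H t i j) := by
      intro t
      rw [hbstar, Finset.sup'_univ_eq_ciSup]
    exact ContinuousWithinAt.congr h2.neg (fun t _ => h3 t) (h3 x)
  -- the main comparison
  have key : ∀ b ∈ Ici (0 : ℝ),
      φ b ≤ Real.exp (-∫ τ in (0 : ℝ)..b, bstar τ) * φ 0 := by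
    intro b hb
    have hεstep : ∀ ε : ℝ, 0 < ε →
        φ b ≤ (φ 0 + ε) * Real.exp (ε * b - ∫ τ in (0 : ℝ)..b, bstar τ) := by
      intro ε hε
      set Bf : ℝ → ℝ :=
        fun t => (φ 0 + ε) * Real.exp (ε * t - ∫ τ in (0 : ℝ)..t, bstar τ) with hBf
      have hint : ∀ x : ℝ, 0 ≤ x → IntervalIntegrable bstar MeasureTheory.volume 0 x :=
        fun x hx => (hbcont.mono (by rw [uIcc_of_le hx]; exact Icc_subset_Ici_self)).intervalIntegrable
      have hI' : ∀ x ∈ Ico (0 : ℝ) b,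
          HasDerivWithinAt (fun t => ∫ τ in (0 : ℝ)..t, bstar τ) (bstar x) (Ici x) x := by
        intro x hx
        have hsub : Ioi x ⊆ Ici (0 : ℝ) := fun y hy => le_trans hx.1 (le_of_lt hy)
        exact intervalIntegral.integral_hasDerivWithinAt_right (hint x hx.1)
          ((hbcont.mono hsub).stronglyMeasurableAtFilter_nhdsWithin measurableSet_Ioi x)
          ((hbcont x hx.1).mono hsub)
      have hB' : ∀ x ∈ Ico (0 : ℝ) b,
          HasDerivWithinAt Bf ((ε - bstar x) * Bf x) (Ici x) x := by
        intro x hx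
        have h1 : HasDerivWithinAt (fun t => ε * t - ∫ τ in (0 : ℝ)..t, bstar τ)
            (ε - bstar x) (Ici x) x := by
          have := ((hasDerivWithinAt_id x (Ici x)).const_mul ε).fun_sub (hI' x hx)
          simpa using this
        have h2 := (h1.exp).const_mul (φ 0 + ε)
        refine h2.congr_deriv ?_
        simp only [hBf]
        ring
      have hBfcont : ContinuousOn Bf (Icc 0 b) := by
        have hIcont : ContinuousOn (fun t => ∫ τ in (0 : ℝ)..t, bstar τ) (Icc 0 b) := by
          have := intervalIntegral.continuousOn_primitive_interval'
            (μ := MeasureTheory.volume) (hint b hb) (left_mem_uIcc (a := (0:ℝ)) (b := b))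
          rwa [uIcc_of_le hb] at this
        exact continuousOn_const.mul
          (Real.continuous_exp.comp_continuousOn
            ((continuous_const.mul continuous_id).continuousOn.sub hIcont))
      have hf' : ∀ x ∈ Ico (0 : ℝ) b, ∀ r, L x < r →
          ∃ᶠ z in 𝓝[>] x, slope φ x z < r := by
        intro x hx r hr
        exact ((hφslope x hx.1).eventually (gt_mem_nhds hr)).frequently
      have ha0 : φ 0 ≤ Bf 0 := by
        simp only [hBf, mul_zero, intervalIntegral.integral_same, sub_zero, Real.exp_zero,
          mul_one]
        linarith
      have hbound : ∀ x ∈ Ico (0 : ℝ) b, φ x = Bf x → L x < (ε - bstar x) * Bf x := by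
        intro x hx heq
        have hBpos : 0 < Bf x := mul_pos (by linarith) (Real.exp_pos _)
        have hφpos : 0 < φ x := heq ▸ hBpos
        calc L x ≤ (-bstar x) * φ x := hLbound x hx.1
          _ < (ε - bstar x) * φ x := by nlinarith
          _ = (ε - bstar x) * Bf x := by rw [heq]
      have := image_le_of_liminf_slope_right_lt_deriv_boundary'
        (hφcont.mono Icc_subset_Ici_self) hf' ha0 hBfcont hB' hbound
        (right_mem_Icc.2 hb)
      exact this
    have hcont0 : Continuous
        (fun ε : ℝ => (φ 0 + ε) * Real.exp (ε * b - ∫ τ in (0 : ℝ)..b, bstar τ)) := by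
      have h1 : Continuous (fun ε : ℝ => ε * b - ∫ τ in (0 : ℝ)..b, bstar τ) :=
        (continuous_id.mul continuous_const).sub continuous_const
      exact (continuous_const.add continuous_id).mul (Real.continuous_exp.comp h1)
    have htend := (hcont0.tendsto 0).mono_left (nhdsWithin_le_nhds (s := Ioi (0:ℝ)))
    have hle := ge_of_tendsto htend
      (eventually_nhdsWithin_of_forall fun ε hε => hεstep ε hε)
    have hle' : φ b ≤ (φ 0 + 0) * Real.exp (0 * b - ∫ τ in (0 : ℝ)..b, bstar τ) := hle
    rw [add_zero, zero_mul, zero_sub] at hle'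
    calc φ b ≤ φ 0 * Real.exp (-∫ τ in (0 : ℝ)..b, bstar τ) := hle'
      _ = Real.exp (-∫ τ in (0 : ℝ)..b, bstar τ) * φ 0 := mul_comm _ _
  -- first conclusion
  have hc : φ 0 = ∑ i, |D.mulVec (z₁ 0 - z₂ 0) i| := by
    have : v 0 = z₁ 0 - z₂ 0 := funext fun i => rfl
    rw [hφ]
    simp only [hw, this]
  have main : ∀ t ∈ Ici (0 : ℝ),
      ∑ i, |z₁ t i - z₂ t i| ≤
        (1 / d) * Real.exp (-∫ τ in (0 : ℝ)..t, bstar τ) *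
          ∑ i, |D.mulVec (z₁ 0 - z₂ 0) i| := by
    intro t ht
    have h1 : d * ∑ i, |v t i| ≤ φ t := hDbelow (v t)
    have h2 := key t ht
    rw [← hc]
    have h3 : ∑ i, |z₁ t i - z₂ t i| = ∑ i, |v t i| := rfl
    rw [h3, mul_assoc]
    have hd' : (0:ℝ) ≤ 1 / d := by positivity
    calc ∑ i, |v t i| = (1 / d) * (d * ∑ i, |v t i|) := by
          rw [← mul_assoc, one_div_mul_cancel hd.ne', one_mul]
      _ ≤ (1 / d) * φ t := mul_le_mul_of_nonneg_left h1 hd'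
      _ ≤ (1 / d) * (Real.exp (-∫ τ in (0 : ℝ)..t, bstar τ) * φ 0) :=
          mul_le_mul_of_nonneg_left h2 hd'
  refine ⟨main, fun hI => ?_⟩
  -- second conclusion
  have h0 : Tendsto (fun t => (1 / d) * Real.exp (-∫ τ in (0 : ℝ)..t, bstar τ) *
      ∑ i, |D.mulVec (z₁ 0 - z₂ 0) i|) atTop (𝓝 0) := by
    have h1 : Tendsto (fun t => -∫ τ in (0 : ℝ)..t, bstar τ) atTop atBot :=
      tendsto_neg_atTop_atBot.comp hI
    have h2 : Tendsto (fun t => Real.exp (-∫ τ in (0 : ℝ)..t, bstar τ)) atTop (𝓝 0) :=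
      Real.tendsto_exp_atBot.comp h1
    have h3 := (h2.const_mul (1 / d)).mul_const (∑ i, |D.mulVec (z₁ 0 - z₂ 0) i|)
    simpa using h3
  refine squeeze_zero' ?_ ?_ h0
  · filter_upwards [eventually_ge_atTop (0:ℝ)] with t ht
    exact Finset.sum_nonneg fun i _ => abs_nonneg _
  · filter_upwards [eventually_ge_atTop (0:ℝ)] with t ht
    exact main t ht
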